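/- Let S ⊆ ℝ be an open subset of (0, ∞) such that every connected component of S is a bounded open interval, and such that for every connected component (a, b) of S, if S ∩ (b, ∞) is nonempty then inf(S ∩ (b, ∞)) ≥ b + (3/2)·(b − a) (i.e., each visit interval of length ℓ is followed by a gap of length at least (3/2)·ℓ before the next component). Then liminf_{T→∞} (1/T)·λ(S ∩ [0, T]) ≤ 2/3, where λ denotes Lebesgue measure on ℝ. -/
import Mathlib


open Set Filter MeasureTheory

/-- If `S ⊆ (0, ∞)` is open, every connected component of `S` is a bounded
open interval, and each component `(a, b)` is followed (if `S` meets `(b, ∞)` at all) by a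
gap of length at least `(3/2) * (b - a)`, then
`liminf_{T → ∞} (1/T) * λ(S ∩ [0, T]) ≤ 2/3`. -/
theorem ergodic_nongeneric_stmt0 (S : Set ℝ) (hopen : IsOpen S) (hsub : S ⊆ Ioi 0)
    (hcomp : ∀ x ∈ S, ∃ a b : ℝ, a < b ∧ connectedComponentIn S x = Ioo a b ∧
      ((S ∩ Ioi b).Nonempty → b + (3 / 2) * (b - a) ≤ sInf (S ∩ Ioi b))) :
    Filter.liminf (fun T : ℝ => (volume (S ∩ Icc 0 T)).toReal / T) Filter.atTop ≤ 2 / 3 := by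
  classical
  choose! A B hAB hcompEq hgap using hcomp
  set f : ℝ → ℝ := fun T => (volume (S ∩ Icc 0 T)).toReal / T with hfdef
  -- It suffices to find arbitrarily large T with f T ≤ 2/3
  suffices hfreq : ∀ M : ℝ, ∃ T, M ≤ T ∧ f T ≤ 2 / 3 by
    refine Filter.liminf_le_of_frequently_le ?_ ?_
    · rw [Filter.frequently_atTop]
      intro M
      obtain ⟨T, hTM, hfT⟩ := hfreq M
      exact ⟨T, hTM, hfT⟩
    · refine ⟨0, ?_⟩
      rw [Filter.eventually_map, eventually_atTop]
      refine ⟨1, fun T hT => ?_⟩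
      have : (0:ℝ) < T := lt_of_lt_of_le one_pos hT
      positivity
  -- basic facts about components
  have hmem : ∀ y ∈ S, A y < y ∧ y < B y := by
    intro y hy
    have h1 := mem_connectedComponentIn hy
    rw [hcompEq y hy] at h1
    exact h1
  have hcsub : ∀ y ∈ S, Ioo (A y) (B y) ⊆ S := by
    intro y hy
    rw [← hcompEq y hy]
    exact connectedComponentIn_subset S y
  have hA0 : ∀ y ∈ S, 0 ≤ A y := by
    intro y hy
    by_contra h
    push_neg at h
    obtain ⟨w, hw1, hw2⟩ := exists_between (show A y < min (B y) 0 by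
      simp [lt_min_iff, hAB y hy, h])
    have hwS : w ∈ S := hcsub y hy ⟨hw1, lt_of_lt_of_le hw2 (min_le_left _ _)⟩
    have := hsub hwS
    have : w < 0 := lt_of_lt_of_le hw2 (min_le_right _ _)
    simp [Set.mem_Ioi] at *
    linarith [hsub hwS]
  have hsame : ∀ y ∈ S, ∀ z, z ∈ Ioo (A y) (B y) → A z = A y ∧ B z = B y := by
    intro y hy z hz
    have hzS : z ∈ S := hcsub y hy hz
    have h1 : connectedComponentIn S y = connectedComponentIn S z := by
      apply connectedComponentIn_eq
      rw [hcompEq y hy]; exact hz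
    rw [hcompEq y hy, hcompEq z hzS] at h1
    constructor
    · rw [← csInf_Ioo (hAB y hy), ← csInf_Ioo (hAB z hzS), h1]
    · rw [← csSup_Ioo (hAB y hy), ← csSup_Ioo (hAB z hzS), h1]
  have hdisj : ∀ y ∈ S, ∀ z ∈ S, ¬ B y ≤ A z → ¬ B z ≤ A y → A y = A z ∧ B y = B z := by
    intro y hy z hz h1 h2
    push_neg at h1 h2
    obtain ⟨w, hw1, hw2⟩ := exists_between (show max (A y) (A z) < min (B y) (B z) by
      simp only [max_lt_iff, lt_min_iff]
      exact ⟨⟨(hAB y hy), h1⟩, ⟨h2, hAB z hz⟩⟩)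
    simp only [max_lt_iff, lt_min_iff] at hw1 hw2
    have e1 := hsame y hy w ⟨hw1.1, hw2.1⟩
    have e2 := hsame z hz w ⟨hw1.2, hw2.2⟩
    exact ⟨e1.1 ▸ e2.1.symm ▸ rfl, e1.2 ▸ e2.2.symm ▸ rfl⟩
  -- the gap bound: if component of y lies before component of z, the expanded interval of y
  -- ends before A z
  have hsInf : ∀ y ∈ S, ∀ z ∈ S, B y ≤ A z → A y + 5/2 * (B y - A y) ≤ A z := by
    intro y hy z hz hle
    obtain ⟨w, hw1, hw2⟩ := exists_between (hAB z hz)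
    have hwS : w ∈ S := hcsub z hz ⟨hw1, hw2⟩
    have hne : (S ∩ Ioi (B y)).Nonempty := ⟨w, hwS, lt_of_le_of_lt hle hw1⟩
    have hg := hgap y hy hne
    have hbdd : BddBelow (S ∩ Ioi (B y)) := ⟨B y, fun t ht => le_of_lt ht.2⟩
    have hinf : sInf (S ∩ Ioi (B y)) ≤ A z := by
      by_contra h
      push_neg at h
      obtain ⟨v, hv1, hv2⟩ := exists_between (show A z < min (B z) (sInf (S ∩ Ioi (B y))) by
        simp [lt_min_iff, hAB z hz, h])
      simp only [lt_min_iff] at hv2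
      have hvS : v ∈ S := hcsub z hz ⟨hv1, hv2.1⟩
      have : sInf (S ∩ Ioi (B y)) ≤ v := csInf_le hbdd ⟨hvS, lt_of_le_of_lt hle hv1⟩
      linarith [hv2.2]
    linarith
  intro M
  -- two cases: S bounded above or not
  by_cases hbd : ∀ N : ℝ, (S ∩ Ioi N).Nonempty
  · -- unbounded case
    obtain ⟨x, hxS, hxM⟩ := hbd (max M 1)
    simp only [Set.mem_Ioi, lt_max_iff] at hxM
    have hxM : max M 1 < x := hxM
    set a := A x with ha
    set b := B x with hb
    have hab : a < b := hAB x hxS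
    set T : ℝ := a + 5/2 * (b - a) with hT
    clear_value T
    clear_value b
    clear_value a
    have ha0 : 0 ≤ a := ha ▸ hA0 x hxS
    have hax : a < x := ha ▸ (hmem x hxS).1
    have hxb : x < b := hb ▸ (hmem x hxS).2
    have hbT : b < T := by rw [hT]; linarith
    have hTM : M ≤ T := by
      have := le_max_left M 1
      linarith
    have hT1 : (1:ℝ) ≤ T := by
      have := le_max_right M 1
      linarith
    have hTpos : (0:ℝ) < T := by linarith
    refine ⟨T, hTM, ?_⟩
    -- Step 1 : no points of S in (b, T]
    have hnogap : S ∩ Icc 0 T ⊆ S ∩ Ioc 0 b := by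
      rintro y ⟨hyS, hy0, hyT⟩
      refine ⟨hyS, hsub hyS, ?_⟩
      by_contra h
      push_neg at h
      have hne : (S ∩ Ioi b).Nonempty := ⟨y, hyS, h⟩
      have hg := hgap x hxS (hb ▸ hne)
      rw [← ha, ← hb] at hg
      have hg' : T ≤ sInf (S ∩ Ioi b) := by
        have : b + 3/2 * (b - a) = T := by rw [hT]; ring
        linarith [hg]
      have hbdd : BddBelow (S ∩ Ioi b) := ⟨b, fun t ht => le_of_lt ht.2⟩
      have h1 : sInf (S ∩ Ioi b) ≤ y := csInf_le hbdd ⟨hyS, h⟩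
      have hyeq : y = T := le_antisymm hyT (le_trans hg' h1)
      -- then T ∈ S and points of its component just below T are in S ∩ Ioi b, below sInf
      have hTS : T ∈ S := hyeq ▸ hyS
      obtain ⟨w, hw1, hw2⟩ := exists_between (show max (A T) b < T by
        simp only [max_lt_iff]
        exact ⟨(hmem T hTS).1, hbT⟩)
      simp only [max_lt_iff] at hw1
      have hwS : w ∈ S := hcsub T hTS ⟨hw1.1, lt_trans hw2 (hmem T hTS).2⟩
      have : sInf (S ∩ Ioi b) ≤ w := csInf_le hbdd ⟨hwS, hw1.2⟩
      linarith
    -- Step 2: cover S ∩ Ioc 0 b by rational-indexed components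
    set Q : Set ℚ := {q : ℚ | (q:ℝ) ∈ S ∧ (q:ℝ) ≤ b} with hQ
    have hcover : S ∩ Ioc 0 b ⊆ ⋃ q ∈ Q, Ioo (A q) (B q) := by
      rintro y ⟨hyS, hy0, hyb⟩
      obtain ⟨q, hq1, hq2⟩ := exists_rat_btwn (hmem y hyS).1
      have hqIoo : (q:ℝ) ∈ Ioo (A y) (B y) := ⟨hq1, lt_trans hq2 (hmem y hyS).2⟩
      have hqS : (q:ℝ) ∈ S := hcsub y hyS hqIoo
      have hqQ : q ∈ Q := ⟨hqS, le_of_lt (lt_of_lt_of_le hq2 hyb)⟩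
      have he := hsame y hyS q hqIoo
      refine Set.mem_biUnion hqQ ?_
      rw [he.1, he.2]
      exact ⟨(hmem y hyS).1, (hmem y hyS).2⟩
    -- Step 3: reindex by endpoints to get pairwise disjointness
    set g : ℚ → ℝ × ℝ := fun q => (A q, B q) with hg
    set P : Set (ℝ × ℝ) := g '' Q with hP
    have hPcnt : P.Countable := (Q.to_countable).image g
    set C : ℝ × ℝ → Set ℝ := fun p => Ioo p.1 p.2 with hC
    set E : ℝ × ℝ → Set ℝ := fun p => Ioo p.1 (p.1 + 5/2 * (p.2 - p.1)) with hE
    have hCE : ∀ p, C p ⊆ E p := by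
      rintro ⟨u, v⟩ z ⟨hz1, hz2⟩
      exact ⟨hz1, by simp only; linarith⟩
    have hEdisj : P.PairwiseDisjoint E := by
      rintro p hp p' hp' hne
      obtain ⟨q, hqQ, rfl⟩ := hp
      obtain ⟨q', hqQ', rfl⟩ := hp'
      have hqS : (q:ℝ) ∈ S := hqQ.1
      have hqS' : (q':ℝ) ∈ S := hqQ'.1
      have hd : B q ≤ A q' ∨ B q' ≤ A q := by
        by_contra h
        push_neg at h
        have := hdisj q hqS q' hqS' (not_le_of_gt h.1) (not_le_of_gt h.2)
        exact hne (by simp [hg, this.1, this.2])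
      have key : ∀ u v : ℚ, (u:ℝ) ∈ S → (v:ℝ) ∈ S → B (u:ℝ) ≤ A (v:ℝ) →
          Disjoint (E (g u)) (E (g v)) := by
        intro u v huS hvS hle
        have h5 := hsInf (u:ℝ) huS (v:ℝ) hvS hle
        rw [Set.disjoint_left]
        rintro z ⟨hz1, hz2⟩ ⟨hz1', _⟩
        simp only [hg, hE] at hz2 hz1'
        linarith
      rcases hd with hd | hd
      · exact key q q' hqS hqS' hd
      · exact (key q' q hqS' hqS hd).symm
    have hCdisj : P.PairwiseDisjoint C := fun p hp p' hp' hne =>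
      ((hEdisj hp hp' hne).mono (hCE p) (hCE p'))
    -- every expanded interval fits in (0, T)
    have hEsub : ∀ p ∈ P, E p ⊆ Ioo 0 T := by
      rintro p ⟨q, hqQ, rfl⟩
      have hqS : (q:ℝ) ∈ S := hqQ.1
      have hq0 : 0 ≤ A q := hA0 q hqS
      have hupper : A q + 5/2 * (B q - A q) ≤ T := by
        by_cases hcase : B q ≤ a
        · have := hsInf q hqS x hxS (ha ▸ hcase)
          linarith
        · -- components must coincide
          have hnle : ¬ b ≤ A q := by
            intro h
            have := (hmem q hqS).1
            have hqb := hqQ.2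
            linarith
          have heq := hdisj q hqS x hxS (ha ▸ hcase) (hb ▸ hnle)
          rw [heq.1, heq.2]
          linarith
      rintro z ⟨hz1, hz2⟩
      simp only [hg] at hz1 hz2
      exact ⟨lt_of_le_of_lt hq0 hz1, lt_of_lt_of_le hz2 hupper⟩
    -- measure computation
    have hPlt : ∀ p ∈ P, p.1 < p.2 := by
      rintro p ⟨q, hqQ, rfl⟩
      exact hAB q hqQ.1
    have hmeasC : volume (⋃ p ∈ P, C p) = ∑' p : P, volume (C p) :=
      measure_biUnion hPcnt hCdisj (fun p _ => measurableSet_Ioo)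
    have hmeasE : volume (⋃ p ∈ P, E p) = ∑' p : P, volume (E p) :=
      measure_biUnion hPcnt hEdisj (fun p _ => measurableSet_Ioo)
    have hvolE : ∀ p ∈ P, volume (E p) = ENNReal.ofReal (5/2) * volume (C p) := by
      rintro ⟨u, v⟩ hp
      have huv : u < v := hPlt _ hp
      simp only [hC, hE, Real.volume_Ioo]
      rw [← ENNReal.ofReal_mul (by norm_num)]
      congr 1
      ring
    have hmu_le : volume (S ∩ Icc 0 T) ≤ ∑' p : P, volume (C p) := by
      rw [← hmeasC]
      apply measure_mono
      refine subset_trans hnogap (subset_trans hcover ?_)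
      intro z hz
      simp only [Set.mem_iUnion] at hz ⊢
      obtain ⟨q, hq, hzq⟩ := hz
      exact ⟨g q, ⟨q, hq, rfl⟩, hzq⟩
    have hsum_le : ENNReal.ofReal (5/2) * (∑' p : P, volume (C p)) ≤ ENNReal.ofReal T := by
      rw [← ENNReal.tsum_mul_left]
      have : ∑' p : P, ENNReal.ofReal (5/2) * volume (C p) = ∑' p : P, volume (E p) := by
        apply tsum_congr
        rintro ⟨p, hp⟩
        exact (hvolE p hp).symm
      rw [this, ← hmeasE]
      calc volume (⋃ p ∈ P, E p) ≤ volume (Ioo 0 T) :=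
            measure_mono (Set.iUnion₂_subset hEsub)
        _ = ENNReal.ofReal T := by rw [Real.volume_Ioo]; norm_num
    have hmu : volume (S ∩ Icc 0 T) ≤ ENNReal.ofReal (2/5 * T) := by
      have h1 : ENNReal.ofReal (5/2) * volume (S ∩ Icc 0 T)
          ≤ ENNReal.ofReal (5/2) * ENNReal.ofReal (2/5 * T) := by
        calc ENNReal.ofReal (5/2) * volume (S ∩ Icc 0 T)
            ≤ ENNReal.ofReal (5/2) * (∑' p : P, volume (C p)) := by
              exact mul_le_mul_right hmu_le _
          _ ≤ ENNReal.ofReal T := hsum_le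
          _ = ENNReal.ofReal (5/2) * ENNReal.ofReal (2/5 * T) := by
              rw [← ENNReal.ofReal_mul (by norm_num)]
              congr 1
              ring
      exact (ENNReal.mul_le_mul_iff_right (by simp) (by simp)).mp h1
    have htoReal : (volume (S ∩ Icc 0 T)).toReal ≤ 2/5 * T := by
      apply ENNReal.toReal_le_of_le_ofReal (by linarith) hmu
    show (volume (S ∩ Icc 0 T)).toReal / T ≤ 2/3
    rw [div_le_iff₀ hTpos]
    linarith
  · -- bounded case
    push_neg at hbd
    obtain ⟨N, hN⟩ := hbd
    set K : ℝ := max N 0 with hK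
    have hK0 : 0 ≤ K := le_max_right _ _
    set T : ℝ := max M (3 * K) + 1 with hT
    have hTM : M ≤ T := by
      have := le_max_left M (3 * K)
      linarith
    have hTK : 3 * K + 1 ≤ T := by
      have := le_max_right M (3 * K)
      linarith
    have hTpos : (0:ℝ) < T := by linarith
    refine ⟨T, hTM, ?_⟩
    have hsubK : S ∩ Icc 0 T ⊆ Icc 0 K := by
      rintro y ⟨hyS, hy0, _⟩
      refine ⟨hy0, ?_⟩
      by_contra h
      push_neg at h
      have : y ∈ S ∩ Ioi N := ⟨hyS, lt_of_le_of_lt (le_max_left N 0) h⟩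
      rw [hN] at this
      exact this
    have hmu : volume (S ∩ Icc 0 T) ≤ ENNReal.ofReal K := by
      calc volume (S ∩ Icc 0 T) ≤ volume (Icc 0 K) := measure_mono hsubK
        _ = ENNReal.ofReal K := by rw [Real.volume_Icc]; norm_num
    have htoReal : (volume (S ∩ Icc 0 T)).toReal ≤ K :=
      ENNReal.toReal_le_of_le_ofReal hK0 hmu
    show (volume (S ∩ Icc 0 T)).toReal / T ≤ 2/3
    rw [div_le_iff₀ hTpos]
    linarith
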